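/- Let $A$ be a commutative ring and $a_1,\ldots,a_r \in A$ elements not generating the unit ideal such that every permutation of $(a_1,\ldots,a_r)$ is a regular sequence. Then any element of $A$ that is divisible by each of $a_1,\ldots,a_r$ is divisible by the product $a_1 \cdots a_r$. -/

import Mathlib

/-- If every permutation of `as` is a regular sequence (and `as` does not
generate the unit ideal), then any element divisible by each `a ∈ as` is divisible by the
product of the `a`'s. -/
theorem stmt_2 {A : Type*} [CommRing A] (as : List A)
    (hunit : Ideal.span {a | a ∈ as} ≠ ⊤)
    (hperm : ∀ bs : List A, bs.Perm as → RingTheory.Sequence.IsRegular A bs) :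
    ∀ x : A, (∀ a ∈ as, a ∣ x) → as.prod ∣ x := by
  induction as with
  | nil => intro x _; simp
  | cons a t ih =>
    classical
    intro x hx
    obtain ⟨y, hy⟩ := hx a List.mem_cons_self
    -- every b ∈ t divides y
    have hby : ∀ b ∈ t, b ∣ y := by
      intro b hb
      obtain ⟨z, hz⟩ := hx b (List.mem_cons_of_mem a hb)
      have hpm : (b :: a :: t.erase b).Perm (a :: t) := by
        refine List.Perm.trans (List.Perm.swap a b _) ?_
        exact List.Perm.cons a (List.perm_cons_erase hb).symm
      have hreg := (hperm _ hpm).toIsWeaklyRegular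
      have h1 := hreg.regular_mod_prev 1 (by simp)
      simp only [List.take, List.getElem_cons_succ, List.getElem_cons_zero] at h1
      -- h1 : IsSMulRegular (A ⧸ (Ideal.ofList [b] • ⊤)) a
      have h0 : a • (Submodule.Quotient.mk y :
          A ⧸ (Ideal.ofList [b] • ⊤ : Submodule A A)) = a • (0 : _) := by
        rw [smul_zero, ← Submodule.Quotient.mk_smul, Submodule.Quotient.mk_eq_zero]
        have : a • y ∈ Ideal.ofList [b] := by
          rw [Ideal.ofList_singleton, Ideal.mem_span_singleton, smul_eq_mul, ← hy, hz]
          exact Dvd.intro z rfl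
        simpa using Ideal.mul_mem_right 1 _ this
      have := h1 h0
      rw [Submodule.Quotient.mk_eq_zero] at this
      have : y ∈ Ideal.ofList [b] := by simpa using this
      rwa [Ideal.ofList_singleton, Ideal.mem_span_singleton] at this
    have hunit' : Ideal.span {b | b ∈ t} ≠ ⊤ := by
      intro h
      apply hunit
      rw [eq_top_iff, ← h]
      exact Ideal.span_mono (fun b hb => List.mem_cons_of_mem a hb)
    have hperm' : ∀ bs : List A, bs.Perm t → RingTheory.Sequence.IsRegular A bs := by
      intro bs hbs
      have hpm : (bs ++ [a]).Perm (a :: t) :=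
        (List.perm_append_singleton a bs).trans (List.Perm.cons a hbs)
      have hreg := hperm _ hpm
      constructor
      · exact ((RingTheory.Sequence.isWeaklyRegular_append_iff A bs [a]).mp
          hreg.toIsWeaklyRegular).1
      · intro htop
        apply hunit
        rw [eq_top_iff]
        rw [smul_eq_mul, Ideal.mul_top] at htop
        rw [htop]
        exact Ideal.span_mono fun b hb =>
          List.mem_cons_of_mem a (hbs.subset hb)
    obtain ⟨w, hw⟩ := ih hunit' hperm' y hby
    exact ⟨w, by rw [List.prod_cons, hy, hw, mul_assoc]⟩
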